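/- Let θ > 0, let m ≥ 1, and let X₁, …, X_m be independent and identically distributed random variables on a probability space (Ω, P) with X_i(ω) > 0 for all ω. If X₁/θ and θ/X₁ are identically distributed, and max(X₁, …, X_m)/θ and θ/min(X₁, …, X_m) are integrable, then E[max(X₁, …, X_m)/θ] = E[θ/min(X₁, …, X_m)]; that is, the departure measure Δ*(F) = (1/m) E[max(X₁,…,X_m)/θ − θ/min(X₁,…,X_m)] equals zero. -/

import Mathlib

open MeasureTheory ProbabilityTheory

/-- The joint law of finitely many independent random variables is the product of the
marginal laws. -/
lemma map_tuple_eq_pi_aux {Ω : Type*} [MeasurableSpace Ω] (P : Measure Ω)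
    [IsProbabilityMeasure P] {m : ℕ} {Y : Fin m → Ω → ℝ} (hmeas : ∀ i, Measurable (Y i))
    (h : iIndepFun Y P) :
    P.map (fun ω i => Y i ω) = Measure.pi (fun i => P.map (Y i)) := by
  have hmt : Measurable (fun ω i => Y i ω) := measurable_pi_lambda _ hmeas
  haveI : ∀ i, IsProbabilityMeasure (P.map (Y i)) :=
    fun i => Measure.isProbabilityMeasure_map (hmeas i).aemeasurable
  refine (Measure.pi_eq fun s hs => ?_).symm
  rw [Measure.map_apply hmt (MeasurableSet.univ_pi hs)]
  have hpre : (fun ω i => Y i ω) ⁻¹' (Set.pi Set.univ s) = ⋂ i ∈ Finset.univ, Y i ⁻¹' s i := by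
    ext ω
    simp [Set.mem_pi]
  rw [hpre, h.measure_inter_preimage_eq_mul Finset.univ (fun i _ => hs i)]
  exact Finset.prod_congr rfl fun i _ => (Measure.map_apply (hmeas i) (hs i)).symm

/-- If `X₁, …, X_m` (`m ≥ 1`) are i.i.d. positive random variables and `X₁` is
log-symmetric about `θ > 0` (i.e. `X₁/θ` and `θ/X₁` are identically distributed), then
`E[max(X₁, …, X_m)/θ] = E[θ/min(X₁, …, X_m)]` (under the stated integrability
conditions); that is, the departure measure
`Δ*(F) = (1/m) E[max(X₁,…,X_m)/θ − θ/min(X₁,…,X_m)]` equals zero. -/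
theorem departure_measure_general_theta_eq_zero
    {Ω : Type*} [MeasurableSpace Ω] (P : Measure Ω) [IsProbabilityMeasure P]
    (θ : ℝ) (hθ : 0 < θ)
    (m : ℕ) (hm : 0 < m) (X : Fin m → Ω → ℝ) (hmeas : ∀ i, Measurable (X i))
    (hpos : ∀ i ω, 0 < X i ω)
    (hindep : iIndepFun X P)
    (hid : ∀ i, IdentDistrib (X i) (X ⟨0, hm⟩) P P)
    (hls : IdentDistrib (fun ω => X ⟨0, hm⟩ ω / θ) (fun ω => θ / X ⟨0, hm⟩ ω) P P)
    (hint1 : Integrable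
      (fun ω => Finset.univ.sup' ⟨⟨0, hm⟩, Finset.mem_univ _⟩ (fun i => X i ω) / θ) P)
    (hint2 : Integrable
      (fun ω => θ / Finset.univ.inf' ⟨⟨0, hm⟩, Finset.mem_univ _⟩ (fun i => X i ω)) P) :
    ∫ ω, Finset.univ.sup' ⟨⟨0, hm⟩, Finset.mem_univ _⟩ (fun i => X i ω) / θ ∂P
      = ∫ ω, θ / Finset.univ.inf' ⟨⟨0, hm⟩, Finset.mem_univ _⟩ (fun i => X i ω) ∂P := by
  have hne : (Finset.univ : Finset (Fin m)).Nonempty := ⟨⟨0, hm⟩, Finset.mem_univ _⟩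
  set Y : Fin m → Ω → ℝ := fun i ω => X i ω / θ with hYdef
  set Z : Fin m → Ω → ℝ := fun i ω => θ / X i ω with hZdef
  have hYmeas : ∀ i, Measurable (Y i) := fun i => (hmeas i).div_const θ
  have hZmeas : ∀ i, Measurable (Z i) := fun i => measurable_const.div (hmeas i)
  have hYindep : iIndepFun Y P :=
    hindep.comp (fun _ x => x / θ) (fun _ => measurable_id.div_const θ)
  have hZindep : iIndepFun Z P :=
    hindep.comp (fun _ x => θ / x) (fun _ => measurable_const.div measurable_id)
  have hYZ : ∀ i, IdentDistrib (Y i) (Z i) P P := by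
    intro i
    have h1 : IdentDistrib (Y i) (fun ω => X ⟨0, hm⟩ ω / θ) P P :=
      (hid i).comp (measurable_id.div_const θ)
    have h2 : IdentDistrib (fun ω => θ / X ⟨0, hm⟩ ω) (Z i) P P :=
      ((hid i).comp (measurable_const.div measurable_id)).symm
    exact (h1.trans hls).trans h2
  have hmap : P.map (fun ω i => Y i ω) = P.map (fun ω i => Z i ω) := by
    rw [map_tuple_eq_pi_aux P hYmeas hYindep, map_tuple_eq_pi_aux P hZmeas hZindep]
    exact congrArg Measure.pi (funext fun i => (hYZ i).map_eq)
  have htuple : IdentDistrib (fun ω i => Y i ω) (fun ω i => Z i ω) P P :=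
    ⟨(measurable_pi_lambda _ hYmeas).aemeasurable,
      (measurable_pi_lambda _ hZmeas).aemeasurable, hmap⟩
  have hsupmeas : Measurable (fun v : Fin m → ℝ => Finset.univ.sup' hne v) := by
    have : Measurable (Finset.univ.sup' hne (fun i (v : Fin m → ℝ) => v i)) :=
      Finset.measurable_sup' hne (fun i _ => measurable_pi_apply i)
    convert this using 1
    funext v
    rw [Finset.sup'_apply]
  have hfin : IdentDistrib (fun ω => Finset.univ.sup' hne (fun i => Y i ω))
      (fun ω => Finset.univ.sup' hne (fun i => Z i ω)) P P := htuple.comp hsupmeas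
  have hYsup : ∀ ω, Finset.univ.sup' hne (fun i => Y i ω)
      = Finset.univ.sup' hne (fun i => X i ω) / θ := by
    intro ω
    exact (Finset.comp_sup'_eq_sup'_comp hne (fun x : ℝ => x / θ)
      (fun x y => (max_div_div_right hθ.le x y).symm)).symm
  have hZsup : ∀ ω, Finset.univ.sup' hne (fun i => Z i ω)
      = θ / Finset.univ.inf' hne (fun i => X i ω) := by
    intro ω
    obtain ⟨j, -, hj⟩ := Finset.exists_mem_eq_inf' hne (fun i => X i ω)
    have hinfpos : 0 < Finset.univ.inf' hne (fun i => X i ω) := hj ▸ hpos j ω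
    apply le_antisymm
    · refine Finset.sup'_le hne _ fun i _ => ?_
      have h1 : Finset.univ.inf' hne (fun i => X i ω) ≤ X i ω :=
        Finset.inf'_le _ (Finset.mem_univ i)
      exact div_le_div_of_nonneg_left hθ.le hinfpos h1
    · rw [hj]
      exact Finset.le_sup' (fun i => θ / X i ω) (Finset.mem_univ j)
  calc ∫ ω, Finset.univ.sup' hne (fun i => X i ω) / θ ∂P
      = ∫ ω, Finset.univ.sup' hne (fun i => Y i ω) ∂P := by
        simp_rw [hYsup]
    _ = ∫ ω, Finset.univ.sup' hne (fun i => Z i ω) ∂P := hfin.integral_eq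
    _ = ∫ ω, θ / Finset.univ.inf' hne (fun i => X i ω) ∂P := by
        simp_rw [hZsup]
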